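/- arXiv:2408.09871 — 2 statements merged into one kernel-verified Lean document; each statement's English description precedes it below -/
import Mathlib

section
/- Let n1, n2 ≥ 3 be natural numbers, m1 ≥ n1 - 1, m2 ≥ n2 - 1, and let k ∈ {4, 6, 10}. Then m1/n1 + m2/n2 > (m1 + m2 + k + 2)/(n1 + n2 + k). -/
theorem cnc_subadditive_par_choice_loop (n1 n2 m1 m2 k : ℕ)
    (hn1 : 3 ≤ n1) (hn2 : 3 ≤ n2)
    (hm1 : n1 - 1 ≤ m1) (hm2 : n2 - 1 ≤ m2)
    (hk : k ∈ ({4, 6, 10} : Set ℕ)) :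
    (m1 : ℝ) / n1 + (m2 : ℝ) / n2 >
      ((m1 : ℝ) + m2 + k + 2) / ((n1 : ℝ) + n2 + k) := by
  have ha : (3:ℝ) ≤ n1 := by exact_mod_cast hn1
  have hb : (3:ℝ) ≤ n2 := by exact_mod_cast hn2
  have h1 : (n1:ℝ) - 1 ≤ m1 := by
    have : (n1 - 1 : ℕ) ≤ m1 := hm1
    have := (Nat.cast_le (α := ℝ)).2 this
    rw [Nat.cast_sub (by omega)] at this
    simpa using this
  have h2 : (n2:ℝ) - 1 ≤ m2 := by
    have : (n2 - 1 : ℕ) ≤ m2 := hm2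
    have := (Nat.cast_le (α := ℝ)).2 this
    rw [Nat.cast_sub (by omega)] at this
    simpa using this
  have hkR : (4:ℝ) ≤ k := by
    rcases hk with h | h | h <;> simp_all <;> norm_num
  have hpa : (0:ℝ) < n1 := by linarith
  have hpb : (0:ℝ) < n2 := by linarith
  have hpN : (0:ℝ) < (n1:ℝ) + n2 + k := by linarith
  rw [gt_iff_lt, div_add_div _ _ (ne_of_gt hpa) (ne_of_gt hpb),
    div_lt_div_iff₀ hpN (by positivity)]
  have h3 : 2*(n1:ℝ) ≤ 3*m1 := by linarith
  have h4 : 2*(n2:ℝ) ≤ 3*m2 := by linarith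
  nlinarith [mul_nonneg (by linarith : (0:ℝ) ≤ 3*(m1:ℝ) - 2*n1)
      (by nlinarith : (0:ℝ) ≤ (n2:ℝ)*((n2:ℝ)+k)),
    mul_nonneg (by linarith : (0:ℝ) ≤ 3*(m2:ℝ) - 2*n2)
      (by nlinarith : (0:ℝ) ≤ (n1:ℝ)*((n1:ℝ)+k)),
    mul_nonneg (mul_pos hpa hpb).le (by linarith : (0:ℝ) ≤ (n2:ℝ) - 3),
    mul_nonneg (mul_pos hpa hpb).le (by linarith : (0:ℝ) ≤ (n1:ℝ) - 3),
    mul_pos hpa hpb]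
end

section
/- Let G be a connected undirected graph obtained as the disjoint union of connected graphs G1 and G2 together with a new vertex t and two new edges joining t to a vertex v1 of G1 and a vertex v2 of G2. Then the set of cut-vertices of G equals (cut-vertices of G1) ∪ (cut-vertices of G2) ∪ {v1, v2, t}. -/
/-- A cut-vertex of a graph: removing it disconnects the graph. -/
def IsCutVertex {V : Type*} (G : SimpleGraph V) (v : V) : Prop :=
  ¬ (G.induce {u | u ≠ v}).Connected

/-- Glue two graphs via a new vertex `t` joined to `v1` in `G1` and to `v2` in `G2`. -/
def glueGraph {V1 V2 : Type*} (G1 : SimpleGraph V1) (G2 : SimpleGraph V2)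
    (v1 : V1) (v2 : V2) : SimpleGraph (V1 ⊕ V2 ⊕ Unit) :=
  SimpleGraph.fromRel (fun a b =>
    match a, b with
    | Sum.inl x, Sum.inl y => G1.Adj x y
    | Sum.inr (Sum.inl x), Sum.inr (Sum.inl y) => G2.Adj x y
    | Sum.inl x, Sum.inr (Sum.inr _) => x = v1
    | Sum.inr (Sum.inl x), Sum.inr (Sum.inr _) => x = v2
    | _, _ => False)

namespace GlueAux

open SimpleGraph Sum

variable {V1 V2 : Type*} {G1 : SimpleGraph V1} {G2 : SimpleGraph V2} {v1 : V1} {v2 : V2}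

lemma reach_inv {V α : Type*} {G : SimpleGraph V} (f : V → α)
    (h : ∀ a b, G.Adj a b → f a = f b) {u v : V} (huv : G.Reachable u v) :
    f u = f v := by
  obtain ⟨w⟩ := huv
  induction w with
  | nil => rfl
  | cons h' _ ih => exact (h _ _ h').trans ih

lemma adj_ll {a b : V1} :
    (glueGraph G1 G2 v1 v2).Adj (inl a) (inl b) ↔ G1.Adj a b := by
  simp only [glueGraph, fromRel_adj]
  constructor
  · rintro ⟨-, h | h⟩
    · exact h
    · exact h.symm
  · exact fun h => ⟨by simpa using h.ne, Or.inl h⟩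

lemma adj_rr {a b : V2} :
    (glueGraph G1 G2 v1 v2).Adj (inr (inl a)) (inr (inl b)) ↔ G2.Adj a b := by
  simp only [glueGraph, fromRel_adj]
  constructor
  · rintro ⟨-, h | h⟩
    · exact h
    · exact h.symm
  · exact fun h => ⟨by simpa using h.ne, Or.inl h⟩

lemma adj_lt {a : V1} {u : Unit} :
    (glueGraph G1 G2 v1 v2).Adj (inl a) (inr (inr u)) ↔ a = v1 := by
  simp [glueGraph, fromRel_adj]

lemma adj_rt {a : V2} {u : Unit} :
    (glueGraph G1 G2 v1 v2).Adj (inr (inl a)) (inr (inr u)) ↔ a = v2 := by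
  simp [glueGraph, fromRel_adj]

lemma not_adj_lr {a : V1} {b : V2} :
    ¬ (glueGraph G1 G2 v1 v2).Adj (inl a) (inr (inl b)) := by
  simp [glueGraph, fromRel_adj]

lemma not_adj_tt {u u' : Unit} :
    ¬ (glueGraph G1 G2 v1 v2).Adj (inr (inr u)) (inr (inr u')) := by
  simp [glueGraph, fromRel_adj]

def homL (G1 : SimpleGraph V1) (G2 : SimpleGraph V2) (v1 : V1) (v2 : V2)
    (s : Set (V1 ⊕ V2 ⊕ Unit)) (t : Set V1) (h : ∀ y ∈ t, (inl y : V1 ⊕ V2 ⊕ Unit) ∈ s) :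
    (G1.induce t) →g ((glueGraph G1 G2 v1 v2).induce s) :=
  ⟨fun z => ⟨inl z.1, h _ z.2⟩, fun hab => comap_adj.mpr (adj_ll.mpr (comap_adj.mp hab))⟩

def homR (G1 : SimpleGraph V1) (G2 : SimpleGraph V2) (v1 : V1) (v2 : V2)
    (s : Set (V1 ⊕ V2 ⊕ Unit)) (t : Set V2) (h : ∀ y ∈ t, (inr (inl y) : V1 ⊕ V2 ⊕ Unit) ∈ s) :
    (G2.induce t) →g ((glueGraph G1 G2 v1 v2).induce s) :=
  ⟨fun z => ⟨inr (inl z.1), h _ z.2⟩, fun hab => comap_adj.mpr (adj_rr.mpr (comap_adj.mp hab))⟩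

def homFL (G1 : SimpleGraph V1) (G2 : SimpleGraph V2) (v1 : V1) (v2 : V2)
    (s : Set (V1 ⊕ V2 ⊕ Unit)) (h : ∀ y : V1, (inl y : V1 ⊕ V2 ⊕ Unit) ∈ s) :
    G1 →g ((glueGraph G1 G2 v1 v2).induce s) :=
  ⟨fun z => ⟨inl z, h z⟩, fun hab => comap_adj.mpr (adj_ll.mpr hab)⟩

def homFR (G1 : SimpleGraph V1) (G2 : SimpleGraph V2) (v1 : V1) (v2 : V2)
    (s : Set (V1 ⊕ V2 ⊕ Unit)) (h : ∀ y : V2, (inr (inl y) : V1 ⊕ V2 ⊕ Unit) ∈ s) :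
    G2 →g ((glueGraph G1 G2 v1 v2).induce s) :=
  ⟨fun z => ⟨inr (inl z), h z⟩, fun hab => comap_adj.mpr (adj_rr.mpr hab)⟩

/-- Removing `t` disconnects. -/
lemma cut_t : IsCutVertex (glueGraph G1 G2 v1 v2) (inr (inr ())) := by
  intro hcon
  set s : Set (V1 ⊕ V2 ⊕ Unit) := {u | u ≠ inr (inr ())} with hs
  have hmem1 : (inl v1 : V1 ⊕ V2 ⊕ Unit) ∈ s := by simp [hs]
  have hmem2 : (inr (inl v2) : V1 ⊕ V2 ⊕ Unit) ∈ s := by simp [hs]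
  have hre : ((glueGraph G1 G2 v1 v2).induce s).Reachable ⟨_, hmem1⟩ ⟨_, hmem2⟩ :=
    hcon.preconnected _ _
  have : ∀ a b : s, ((glueGraph G1 G2 v1 v2).induce s).Adj a b →
      (Sum.isLeft a.1) = (Sum.isLeft b.1) := by
    rintro ⟨(x | x | x), ha⟩ ⟨(y | y | y), hb⟩ hab
    · rfl
    · exact absurd (comap_adj.mp hab) not_adj_lr
    · exact absurd rfl hb
    · exact absurd (comap_adj.mp hab).symm not_adj_lr
    · rfl
    · exact absurd rfl hb
    · exact absurd rfl ha
    · exact absurd rfl ha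
    · exact absurd rfl ha
  exact absurd (reach_inv _ this hre) (by simp)

/-- Removing `v1` disconnects. -/
lemma cut_v1 (hV1 : Nontrivial V1) : IsCutVertex (glueGraph G1 G2 v1 v2) (inl v1) := by
  intro hcon
  obtain ⟨w, hw⟩ := exists_ne v1
  set s : Set (V1 ⊕ V2 ⊕ Unit) := {u | u ≠ inl v1} with hs
  have hmem1 : (inl w : V1 ⊕ V2 ⊕ Unit) ∈ s := by simp [hs, hw]
  have hmem2 : (inr (inr ()) : V1 ⊕ V2 ⊕ Unit) ∈ s := by simp [hs]
  have hre : ((glueGraph G1 G2 v1 v2).induce s).Reachable ⟨_, hmem1⟩ ⟨_, hmem2⟩ :=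
    hcon.preconnected _ _
  have : ∀ a b : s, ((glueGraph G1 G2 v1 v2).induce s).Adj a b →
      (Sum.isLeft a.1) = (Sum.isLeft b.1) := by
    rintro ⟨(x | x | x), ha⟩ ⟨(y | y | y), hb⟩ hab
    · rfl
    · exact absurd (comap_adj.mp hab) not_adj_lr
    · exact absurd (by simpa using (adj_lt.mp (comap_adj.mp hab))) ha
    · exact absurd (comap_adj.mp hab).symm not_adj_lr
    · rfl
    · rfl
    · exact absurd (by simpa using (adj_lt.mp (comap_adj.mp hab).symm)) hb
    · rfl
    · rfl
  exact absurd (reach_inv _ this hre) (by simp)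

/-- Removing `v2` disconnects. -/
lemma cut_v2 (hV2 : Nontrivial V2) : IsCutVertex (glueGraph G1 G2 v1 v2) (inr (inl v2)) := by
  intro hcon
  obtain ⟨w, hw⟩ := exists_ne v2
  set s : Set (V1 ⊕ V2 ⊕ Unit) := {u | u ≠ inr (inl v2)} with hs
  have hmem1 : (inr (inl w) : V1 ⊕ V2 ⊕ Unit) ∈ s := by simp [hs, hw]
  have hmem2 : (inr (inr ()) : V1 ⊕ V2 ⊕ Unit) ∈ s := by simp [hs]
  have hre : ((glueGraph G1 G2 v1 v2).induce s).Reachable ⟨_, hmem1⟩ ⟨_, hmem2⟩ :=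
    hcon.preconnected _ _
  have : ∀ a b : s, ((glueGraph G1 G2 v1 v2).induce s).Adj a b →
      ((fun u => match u with | inr (inl _) => true | _ => false) a.1)
        = ((fun u => match u with | inr (inl _) => true | _ => false) b.1) := by
    rintro ⟨(x | x | x), ha⟩ ⟨(y | y | y), hb⟩ hab
    · rfl
    · exact absurd (comap_adj.mp hab) not_adj_lr
    · rfl
    · exact absurd (comap_adj.mp hab).symm not_adj_lr
    · rfl
    · exact absurd (by simpa using (adj_rt.mp (comap_adj.mp hab))) ha
    · rfl
    · exact absurd (by simpa using (adj_rt.mp (comap_adj.mp hab).symm)) hb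
    · rfl
  exact absurd (reach_inv _ this hre) (by simp)

/-- If removing `x ≠ v1` leaves `G1` connected, the glue minus `inl x` is connected. -/
lemma connected_of_left (hG2 : G2.Connected) {x : V1} (hx : x ≠ v1)
    (hcon : (G1.induce {u | u ≠ x}).Connected) :
    ((glueGraph G1 G2 v1 v2).induce {u | u ≠ inl x}).Connected := by
  set s : Set (V1 ⊕ V2 ⊕ Unit) := {u | u ≠ inl x} with hs
  have hmt : (inr (inr ()) : V1 ⊕ V2 ⊕ Unit) ∈ s := by simp [hs]
  have hsub : ∀ y ∈ ({u | u ≠ x} : Set V1), (inl y : V1 ⊕ V2 ⊕ Unit) ∈ s :=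
    fun y hy h => hy (Sum.inl.inj h)
  have hsubR : ∀ y : V2, (inr (inl y) : V1 ⊕ V2 ⊕ Unit) ∈ s := fun y h => by simp at h
  set p : ↑s := ⟨inr (inr ()), hmt⟩ with hp
  have key : ∀ a : ↑s, ((glueGraph G1 G2 v1 v2).induce s).Reachable a p := by
    rintro ⟨(y | y | y), ha⟩
    · have hy : y ≠ x := by simpa [hs] using ha
      have h1 : (G1.induce {u | u ≠ x}).Reachable ⟨y, hy⟩ ⟨v1, hx.symm⟩ :=
        hcon.preconnected _ _
      have h2 := h1.map (homL G1 G2 v1 v2 s _ hsub)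
      have hadj : ((glueGraph G1 G2 v1 v2).induce s).Adj
          (homL G1 G2 v1 v2 s _ hsub ⟨v1, hx.symm⟩) p :=
        comap_adj.mpr (show (glueGraph G1 G2 v1 v2).Adj (inl v1) (inr (inr ())) from
          adj_lt.mpr rfl)
      exact h2.trans hadj.reachable
    · have h1 : G2.Reachable y v2 := hG2.preconnected _ _
      have h2 := h1.map (homFR G1 G2 v1 v2 s hsubR)
      have hadj : ((glueGraph G1 G2 v1 v2).induce s).Adj (homFR G1 G2 v1 v2 s hsubR v2) p :=
        comap_adj.mpr (show (glueGraph G1 G2 v1 v2).Adj (inr (inl v2)) (inr (inr ())) from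
          adj_rt.mpr rfl)
      exact h2.trans hadj.reachable
    · have he : (⟨inr (inr y), ha⟩ : ↑s) = p := by cases y; rfl
      rw [he]
  rw [connected_iff]
  exact ⟨fun a b => (key a).trans (key b).symm, ⟨p⟩⟩

/-- If removing `x ≠ v2` leaves `G2` connected, the glue minus `inr (inl x)` is connected. -/
lemma connected_of_right (hG1 : G1.Connected) {x : V2} (hx : x ≠ v2)
    (hcon : (G2.induce {u | u ≠ x}).Connected) :
    ((glueGraph G1 G2 v1 v2).induce {u | u ≠ inr (inl x)}).Connected := by
  set s : Set (V1 ⊕ V2 ⊕ Unit) := {u | u ≠ inr (inl x)} with hs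
  have hmt : (inr (inr ()) : V1 ⊕ V2 ⊕ Unit) ∈ s := by simp [hs]
  have hsub : ∀ y ∈ ({u | u ≠ x} : Set V2), (inr (inl y) : V1 ⊕ V2 ⊕ Unit) ∈ s :=
    fun y hy h => hy (Sum.inl.inj (Sum.inr.inj h))
  have hsubL : ∀ y : V1, (inl y : V1 ⊕ V2 ⊕ Unit) ∈ s := fun y h => by simp at h
  set p : ↑s := ⟨inr (inr ()), hmt⟩ with hp
  have key : ∀ a : ↑s, ((glueGraph G1 G2 v1 v2).induce s).Reachable a p := by
    rintro ⟨(y | y | y), ha⟩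
    · have h1 : G1.Reachable y v1 := hG1.preconnected _ _
      have h2 := h1.map (homFL G1 G2 v1 v2 s hsubL)
      have hadj : ((glueGraph G1 G2 v1 v2).induce s).Adj (homFL G1 G2 v1 v2 s hsubL v1) p :=
        comap_adj.mpr (show (glueGraph G1 G2 v1 v2).Adj (inl v1) (inr (inr ())) from
          adj_lt.mpr rfl)
      exact h2.trans hadj.reachable
    · have hy : y ≠ x := by simpa [hs] using ha
      have h1 : (G2.induce {u | u ≠ x}).Reachable ⟨y, hy⟩ ⟨v2, hx.symm⟩ :=
        hcon.preconnected _ _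
      have h2 := h1.map (homR G1 G2 v1 v2 s _ hsub)
      have hadj : ((glueGraph G1 G2 v1 v2).induce s).Adj
          (homR G1 G2 v1 v2 s _ hsub ⟨v2, hx.symm⟩) p :=
        comap_adj.mpr (show (glueGraph G1 G2 v1 v2).Adj (inr (inl v2)) (inr (inr ())) from
          adj_rt.mpr rfl)
      exact h2.trans hadj.reachable
    · have he : (⟨inr (inr y), ha⟩ : ↑s) = p := by cases y; rfl
      rw [he]
  rw [connected_iff]
  exact ⟨fun a b => (key a).trans (key b).symm, ⟨p⟩⟩

/-- If `x ≠ v1` is a cut vertex of `G1`, then `inl x` is a cut vertex of the glue. -/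
lemma cut_of_left (hV1 : Nontrivial V1) {x : V1} (hx : x ≠ v1)
    (hcut : IsCutVertex G1 x) : IsCutVertex (glueGraph G1 G2 v1 v2) (inl x) := by
  classical
  intro hcon
  set t : Set V1 := {u | u ≠ x} with ht
  have hne : Nonempty t := by
    obtain ⟨y, hy⟩ := exists_ne x
    exact ⟨⟨y, hy⟩⟩
  have hnp : ¬ (G1.induce t).Preconnected := by
    intro hpre
    exact hcut ((connected_iff _).mpr ⟨hpre, hne⟩)
  rw [SimpleGraph.Preconnected] at hnp
  push_neg at hnp
  obtain ⟨a, b, hab⟩ := hnp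
  set s : Set (V1 ⊕ V2 ⊕ Unit) := {u | u ≠ inl x} with hs
  have hv1 : v1 ∈ t := hx.symm
  set C := (G1.induce t).connectedComponentMk with hC
  set f : (V1 ⊕ V2 ⊕ Unit) → (G1.induce t).ConnectedComponent :=
    fun u => match u with
      | inl y => if h : y ≠ x then C ⟨y, h⟩ else C ⟨v1, hv1⟩
      | inr _ => C ⟨v1, hv1⟩ with hf
  have hinv : ∀ p q : s, ((glueGraph G1 G2 v1 v2).induce s).Adj p q → f p.1 = f q.1 := by
    rintro ⟨(y | y | y), hyp⟩ ⟨(z | z | z), hzq⟩ hpq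
    · have hy : y ≠ x := by simpa [hs] using hyp
      have hz : z ≠ x := by simpa [hs] using hzq
      have hadj : (G1.induce t).Adj ⟨y, hy⟩ ⟨z, hz⟩ :=
        comap_adj.mpr (adj_ll.mp (comap_adj.mp hpq))
      simp only [hf, dif_pos hy, dif_pos hz]
      exact ConnectedComponent.eq.mpr hadj.reachable
    · exact absurd (comap_adj.mp hpq) not_adj_lr
    · have hy1 : y = v1 := adj_lt.mp (comap_adj.mp hpq)
      subst hy1
      simp only [hf]
      rw [dif_pos (show _ ≠ x from hv1)]
    · exact absurd (comap_adj.mp hpq).symm not_adj_lr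
    · rfl
    · rfl
    · have hz1 : z = v1 := adj_lt.mp (comap_adj.mp hpq).symm
      subst hz1
      simp only [hf]
      rw [dif_pos (show _ ≠ x from hv1)]
    · rfl
    · rfl
  have hma : (inl a.1 : V1 ⊕ V2 ⊕ Unit) ∈ s := fun h => a.2 (Sum.inl.inj h)
  have hmb : (inl b.1 : V1 ⊕ V2 ⊕ Unit) ∈ s := fun h => b.2 (Sum.inl.inj h)
  have hre : ((glueGraph G1 G2 v1 v2).induce s).Reachable ⟨_, hma⟩ ⟨_, hmb⟩ :=
    hcon.preconnected _ _
  have := reach_inv _ hinv hre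
  simp only [hf] at this
  rw [dif_pos (show a.1 ≠ x from a.2), dif_pos (show b.1 ≠ x from b.2)] at this
  exact hab (SimpleGraph.ConnectedComponent.eq.mp (hC ▸ this))

/-- If `x ≠ v2` is a cut vertex of `G2`, then `inr (inl x)` is a cut vertex of the glue. -/
lemma cut_of_right (hV2 : Nontrivial V2) {x : V2} (hx : x ≠ v2)
    (hcut : IsCutVertex G2 x) : IsCutVertex (glueGraph G1 G2 v1 v2) (inr (inl x)) := by
  classical
  intro hcon
  set t : Set V2 := {u | u ≠ x} with ht
  have hne : Nonempty t := by
    obtain ⟨y, hy⟩ := exists_ne x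
    exact ⟨⟨y, hy⟩⟩
  have hnp : ¬ (G2.induce t).Preconnected := by
    intro hpre
    exact hcut ((connected_iff _).mpr ⟨hpre, hne⟩)
  rw [SimpleGraph.Preconnected] at hnp
  push_neg at hnp
  obtain ⟨a, b, hab⟩ := hnp
  set s : Set (V1 ⊕ V2 ⊕ Unit) := {u | u ≠ inr (inl x)} with hs
  have hv2 : v2 ∈ t := hx.symm
  set C := (G2.induce t).connectedComponentMk with hC
  set f : (V1 ⊕ V2 ⊕ Unit) → (G2.induce t).ConnectedComponent :=
    fun u => match u with
      | inr (inl y) => if h : y ≠ x then C ⟨y, h⟩ else C ⟨v2, hv2⟩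
      | _ => C ⟨v2, hv2⟩ with hf
  have hinv : ∀ p q : s, ((glueGraph G1 G2 v1 v2).induce s).Adj p q → f p.1 = f q.1 := by
    rintro ⟨(y | y | y), hyp⟩ ⟨(z | z | z), hzq⟩ hpq
    · rfl
    · exact absurd (comap_adj.mp hpq) not_adj_lr
    · rfl
    · exact absurd (comap_adj.mp hpq).symm not_adj_lr
    · have hy : y ≠ x := by simpa [hs] using hyp
      have hz : z ≠ x := by simpa [hs] using hzq
      have hadj : (G2.induce t).Adj ⟨y, hy⟩ ⟨z, hz⟩ :=
        comap_adj.mpr (adj_rr.mp (comap_adj.mp hpq))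
      simp only [hf, dif_pos hy, dif_pos hz]
      exact ConnectedComponent.eq.mpr hadj.reachable
    · have hy1 : y = v2 := adj_rt.mp (comap_adj.mp hpq)
      subst hy1
      simp only [hf]
      rw [dif_pos (show _ ≠ x from hv2)]
    · rfl
    · have hz1 : z = v2 := adj_rt.mp (comap_adj.mp hpq).symm
      subst hz1
      simp only [hf]
      rw [dif_pos (show _ ≠ x from hv2)]
    · rfl
  have hma : (inr (inl a.1) : V1 ⊕ V2 ⊕ Unit) ∈ s := fun h => a.2 (Sum.inl.inj (Sum.inr.inj h))
  have hmb : (inr (inl b.1) : V1 ⊕ V2 ⊕ Unit) ∈ s := fun h => b.2 (Sum.inl.inj (Sum.inr.inj h))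
  have hre : ((glueGraph G1 G2 v1 v2).induce s).Reachable ⟨_, hma⟩ ⟨_, hmb⟩ :=
    hcon.preconnected _ _
  have := reach_inv _ hinv hre
  simp only [hf] at this
  rw [dif_pos (show a.1 ≠ x from a.2), dif_pos (show b.1 ≠ x from b.2)] at this
  exact hab (SimpleGraph.ConnectedComponent.eq.mp (hC ▸ this))

end GlueAux

theorem cut_vertices_of_glue {V1 V2 : Type*}
    (G1 : SimpleGraph V1) (G2 : SimpleGraph V2) (v1 : V1) (v2 : V2)
    (hG1 : G1.Connected) (hG2 : G2.Connected)
    (hV1 : Nontrivial V1) (hV2 : Nontrivial V2) :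
    ∀ w : V1 ⊕ V2 ⊕ Unit,
      IsCutVertex (glueGraph G1 G2 v1 v2) w ↔
        ((∃ x, w = Sum.inl x ∧ IsCutVertex G1 x) ∨
         (∃ x, w = Sum.inr (Sum.inl x) ∧ IsCutVertex G2 x) ∨
         w = Sum.inl v1 ∨ w = Sum.inr (Sum.inl v2) ∨ w = Sum.inr (Sum.inr ())) := by
  intro w
  rcases w with x | x | u
  · by_cases hx : x = v1
    · subst hx
      exact iff_of_true (GlueAux.cut_v1 hV1) (by simp)
    · have key : IsCutVertex (glueGraph G1 G2 v1 v2) (Sum.inl x) ↔ IsCutVertex G1 x := by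
        constructor
        · intro h
          by_contra hc
          exact h (GlueAux.connected_of_left hG2 hx (not_not.mp hc))
        · exact GlueAux.cut_of_left hV1 hx
      simpa [hx] using key
  · by_cases hx : x = v2
    · subst hx
      exact iff_of_true (GlueAux.cut_v2 hV2) (by simp)
    · have key : IsCutVertex (glueGraph G1 G2 v1 v2) (Sum.inr (Sum.inl x)) ↔ IsCutVertex G2 x := by
        constructor
        · intro h
          by_contra hc
          exact h (GlueAux.connected_of_right hG1 hx (not_not.mp hc))
        · exact GlueAux.cut_of_right hV2 hx
      simpa [hx] using key
  · cases u
    exact iff_of_true GlueAux.cut_t (by simp)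
end
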